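/- Let k ≥ 3 be odd and n ≥ 1. With ξ_{k,n} as defined via the product of contractions C_{2,3}C_{4,5}⋯C_{2k,1} on V_n^{⊗2k}, and e = Σ_{i=1}^n (p_i ∧ q_i)^{⊗k} ∈ (Λ²V_n)^{⊗k} (where each factor p_i∧q_i is viewed as p_i⊗q_i − q_i⊗p_i in V_n⊗V_n), one has ξ_{k,n}(e) = −2n. In particular ξ_{k,n} ≠ 0. -/

import Mathlib

open scoped TensorProduct

abbrev Vn (n : ℕ) : Type := (Fin n ⊕ Fin n) → ℚ

def pvec (n : ℕ) (i : Fin n) : Vn n := Pi.single (Sum.inl i) 1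

def qvec (n : ℕ) (i : Fin n) : Vn n := Pi.single (Sum.inr i) 1

/-- The wedge `a ∧ b` as an element of `⋀[ℚ]² V`. -/
def wedge (V : Type*) [AddCommGroup V] [Module ℚ V] (a b : V) : ⋀[ℚ]^2 V :=
  ⟨ExteriorAlgebra.ιMulti ℚ 2 ![a, b],
    ExteriorAlgebra.ιMulti_range ℚ 2 (Set.mem_range_self _)⟩

open Fin.NatCast in
lemma const_of_cyclic {k : ℕ} [NeZero k] (ε : Fin k → Bool)
    (h : ∀ j : Fin k, ε j = ε (j + 1)) : ∀ j, ε j = ε 0 := by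
  have hm : ∀ m : ℕ, ε (m : Fin k) = ε 0 := by
    intro m
    induction m with
    | zero => simp
    | succ m ih => rw [Nat.cast_add, Nat.cast_one, ← h, ih]
  intro j
  rw [← Fin.cast_val_eq_self j, hm]

theorem stmt_3 (k n : ℕ) [NeZero k] (hk : 3 ≤ k) (hodd : Odd k) (hn : 1 ≤ n)
    (ω : Vn n →ₗ[ℚ] Vn n →ₗ[ℚ] ℚ)
    (hpq : ∀ i j, ω (pvec n i) (qvec n j) = if i = j then 1 else 0)
    (hqp : ∀ i j, ω (qvec n i) (pvec n j) = if i = j then -1 else 0)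
    (hpp : ∀ i j, ω (pvec n i) (pvec n j) = 0)
    (hqq : ∀ i j, ω (qvec n i) (qvec n j) = 0)
    (ξ : (⨂[ℚ] _ : Fin k, ↥(⋀[ℚ]^2 (Vn n))) →ₗ[ℚ] ℚ)
    (hξ : ∀ a b : Fin k → Vn n,
      ξ (PiTensorProduct.tprod ℚ (fun i => wedge (Vn n) (a i) (b i))) =
        ∑ ε : Fin k → Bool,
          (∏ i : Fin k, (if ε i then (-1 : ℚ) else 1)) *
            ∏ i : Fin k,
              ω (if ε i then a i else b i)
                (if ε (i + 1) then b (i + 1) else a (i + 1))) :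
    ξ (∑ i : Fin n,
        PiTensorProduct.tprod ℚ
          (fun _ : Fin k => wedge (Vn n) (pvec n i) (qvec n i))) = -(2 * n) ∧
    ξ ≠ 0 := by
  have key : ∀ i : Fin n,
      ξ (PiTensorProduct.tprod ℚ
        (fun _ : Fin k => wedge (Vn n) (pvec n i) (qvec n i))) = -2 := by
    intro i
    rw [hξ (fun _ => pvec n i) (fun _ => qvec n i)]
    rw [Finset.sum_eq_add_of_mem (fun _ => true) (fun _ => false)
      (Finset.mem_univ _) (Finset.mem_univ _) (by intro h; exact absurd (congrFun h 0) (by simp))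
      ?_]
    · simp only [if_true, Bool.false_eq_true, if_false, Finset.prod_const,
        Finset.card_univ, Fintype.card_fin, hpq, hqp, if_pos rfl]
      rw [Odd.neg_one_pow hodd]
      ring
    · intro ε _ hne
      obtain ⟨hne1, hne2⟩ := hne
      have : ∃ j : Fin k, ε j ≠ ε (j + 1) := by
        by_contra hcon
        push_neg at hcon
        have hc := const_of_cyclic ε hcon
        cases hb : ε 0 with
        | true => exact hne1 (funext fun j => by rw [hc j, hb])
        | false => exact hne2 (funext fun j => by rw [hc j, hb])
      obtain ⟨j, hj⟩ := this
      have hzero : ω (if ε j then pvec n i else qvec n i)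
          (if ε (j + 1) then qvec n i else pvec n i) = 0 := by
        cases h1 : ε j <;> cases h2 : ε (j + 1) <;> simp_all [hpp, hqq]
      have hz2 : (∏ i1 : Fin k, (ω (if ε i1 = true then pvec n i else qvec n i))
          (if ε (i1 + 1) = true then qvec n i else pvec n i)) = 0 :=
        Finset.prod_eq_zero (Finset.mem_univ j) hzero
      rw [hz2, mul_zero]
  constructor
  · rw [map_sum]
    simp only [key, Finset.sum_const, Finset.card_univ, Fintype.card_fin]
    push_cast
    ring
  · intro h0
    have := key ⟨0, hn⟩
    rw [h0] at this
    simp at this
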